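/- Maximum principle (Theorem 'Milne theorem 3'): There exists ε₀ ∈ (0,1), depending only on R₁, R₂ and n, such that for every ε ∈ (0, ε₀], every bounded in-flow data h, and every classical solution f of the ε-Milne problem with geometric correction with data h and source S ≡ 0, one has inf{h(φ,ψ) : sin φ > 0} ≤ f(η,φ,ψ) ≤ sup{h(φ,ψ) : sin φ > 0} for all (η,φ,ψ) ∈ D. -/

import Mathlib

noncomputable section

open Real Set MeasureTheory

namespace MilneStmt

/-- The boundary-layer thickness `L = ε^(-n)`. -/
def layerL (ε n : ℝ) : ℝ := ε ^ (-n)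

/-- The geometric force `F(η,ψ)`. -/
def force (R₁ R₂ ε η ψ : ℝ) : ℝ :=
  -ε * (Real.sin ψ ^ 2 / (R₁ - ε * η) + Real.cos ψ ^ 2 / (R₂ - ε * η))

/-- The domain `D = [0,L] × [-π/2, π/2] × [-π, π]` of the variables `(η, φ, ψ)`. -/
def milneDomain (L : ℝ) : Set (ℝ × ℝ × ℝ) :=
  Icc (0 : ℝ) L ×ˢ Icc (-(π / 2)) (π / 2) ×ˢ Icc (-π) π

/-- The in-flow set `{(φ,ψ) : sin φ > 0, ψ ∈ [-π,π]}` (with `φ` in the velocity range). -/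
def inflowSet : Set (ℝ × ℝ) :=
  {q | 0 < Real.sin q.1 ∧ q.1 ∈ Icc (-(π / 2)) (π / 2) ∧ q.2 ∈ Icc (-π) π}

/-- The angular average `f̄(η)`. -/
def angAvg (f : ℝ × ℝ × ℝ → ℝ) (η : ℝ) : ℝ :=
  (1 / (4 * π)) * ∫ ψ in (-π)..π, ∫ φ in (-(π / 2))..(π / 2), f (η, φ, ψ) * Real.cos φ

/-- Partial derivative in `η`. -/
def dEta (g : ℝ × ℝ × ℝ → ℝ) (p : ℝ × ℝ × ℝ) : ℝ :=
  deriv (fun t => g (t, p.2.1, p.2.2)) p.1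

/-- Partial derivative in `φ`. -/
def dPhi (g : ℝ × ℝ × ℝ → ℝ) (p : ℝ × ℝ × ℝ) : ℝ :=
  deriv (fun t => g (p.1, t, p.2.2)) p.2.1

/-- Partial derivative in `ψ`. -/
def dPsi (g : ℝ × ℝ × ℝ → ℝ) (p : ℝ × ℝ × ℝ) : ℝ :=
  deriv (fun t => g (p.1, p.2.1, t)) p.2.2

/-- A classical solution of the ε-Milne problem with geometric correction,
with in-flow data `h` and source `S`. -/
structure IsMilneSolution (R₁ R₂ ε n : ℝ) (h : ℝ → ℝ → ℝ) (S : ℝ × ℝ × ℝ → ℝ)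
    (f : ℝ × ℝ × ℝ → ℝ) : Prop where
  smooth : ContDiffOn ℝ 1 f (milneDomain (layerL ε n))
  eqn : ∀ p ∈ interior (milneDomain (layerL ε n)),
    Real.sin p.2.1 * dEta f p + force R₁ R₂ ε p.1 p.2.2 * Real.cos p.2.1 * dPhi f p
      + f p - angAvg f p.1 = S p
  inflow : ∀ q ∈ inflowSet, f (0, q.1, q.2) = h q.1 q.2
  reflect : ∀ φ ψ : ℝ, f (layerL ε n, φ, ψ) = f (layerL ε n, -φ, ψ)

/-- The weighted `L²` norm on `D`. -/
def l2Norm (L : ℝ) (g : ℝ × ℝ × ℝ → ℝ) : ℝ :=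
  Real.sqrt (∫ η in (0 : ℝ)..L, ∫ ψ in (-π)..π, ∫ φ in (-(π / 2))..(π / 2),
    g (η, φ, ψ) ^ 2 * Real.cos φ)

/-- The `L^∞` norm (sup over `D`). -/
def linfNorm (L : ℝ) (g : ℝ × ℝ × ℝ → ℝ) : ℝ :=
  ⨆ p ∈ milneDomain L, |g p|

/-- The `L^∞` norm over the in-flow boundary. -/
def inflowLinf (g : ℝ → ℝ → ℝ) : ℝ :=
  ⨆ q ∈ inflowSet, |g q.1 q.2|

/-- The limit value `f_L = (3/(4π)) ∫∫ f(L,φ,ψ) sin²φ cos φ dφ dψ`. -/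
def limitValue (L : ℝ) (f : ℝ × ℝ × ℝ → ℝ) : ℝ :=
  (3 / (4 * π)) * ∫ ψ in (-π)..π, ∫ φ in (-(π / 2))..(π / 2),
    f (L, φ, ψ) * Real.sin φ ^ 2 * Real.cos φ

/-- The data bounds with constants `K` and `M` for in-flow data `h` and source `S`. -/
structure DataBounds (K M L : ℝ) (h : ℝ → ℝ → ℝ) (S : ℝ × ℝ × ℝ → ℝ) : Prop where
  hSmooth : ContDiffOn ℝ 1 (fun q : ℝ × ℝ => h q.1 q.2) inflowSet
  hBound : ∀ q ∈ inflowSet,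
    |h q.1 q.2| + |deriv (fun t => h t q.2) q.1| + |deriv (fun t => h q.1 t) q.2| ≤ M
  sSmooth : ContDiffOn ℝ 1 S (milneDomain L)
  sBound : ∀ p ∈ milneDomain L,
    Real.exp (K * p.1) * (|S p| + |dEta S p| + |dPhi S p| + |dPsi S p|) ≤ M

open intervalIntegral Topology Filter

/- ============ auxiliary lemmas ============ -/

lemma MP.zero_of_nonneg_int_zero {g : ℝ → ℝ} {a b : ℝ} (hab : a < b)
    (hc : ContinuousOn g (Icc a b)) (hnn : ∀ x ∈ Icc a b, 0 ≤ g x)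
    (hz : (∫ x in a..b, g x) = 0) : ∀ x ∈ Icc a b, g x = 0 := by
  by_contra hcon
  push_neg at hcon
  obtain ⟨c, hc1, hc2⟩ := hcon
  have hpos : 0 < g c := lt_of_le_of_ne (hnn c hc1) (Ne.symm hc2)
  have := intervalIntegral.integral_pos hab hc (fun x hx => hnn x ⟨le_of_lt hx.1, hx.2⟩)
    ⟨c, hc1, hpos⟩
  linarith [this.trans_eq hz]

lemma MP.deriv_nonpos_left {g : ℝ → ℝ} {a b d : ℝ} (hab : a < b)
    (hd : HasDerivWithinAt g d (Icc a b) a) (hmax : ∀ t ∈ Icc a b, g t ≤ g a) : d ≤ 0 := by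
  rw [hasDerivWithinAt_iff_tendsto_slope] at hd
  haveI hne : (𝓝[Icc a b \ {a}] a).NeBot := by
    have : a ∈ closure (Icc a b \ {a}) := by
      have : Ioc a b ⊆ Icc a b \ {a} := fun x hx => ⟨⟨hx.1.le, hx.2⟩, ne_of_gt hx.1⟩
      exact closure_mono this (by rw [closure_Ioc hab.ne]; exact ⟨le_rfl, hab.le⟩)
    exact mem_closure_iff_nhdsWithin_neBot.mp this
  refine le_of_tendsto hd ?_
  filter_upwards [self_mem_nhdsWithin] with t ht
  have h1 : a < t := lt_of_le_of_ne ht.1.1 (Ne.symm ht.2)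
  have hnum : g t - g a ≤ 0 := sub_nonpos.mpr (hmax t ht.1)
  rw [slope_def_field]
  have h2 : (0:ℝ) < t - a := sub_pos.mpr h1
  rw [div_nonpos_iff]
  right; exact ⟨hnum, h2.le⟩

lemma MP.deriv_nonneg_right {g : ℝ → ℝ} {a b d : ℝ} (hab : a < b)
    (hd : HasDerivWithinAt g d (Icc a b) b) (hmax : ∀ t ∈ Icc a b, g t ≤ g b) : 0 ≤ d := by
  rw [hasDerivWithinAt_iff_tendsto_slope] at hd
  haveI hne : (𝓝[Icc a b \ {b}] b).NeBot := by
    have : b ∈ closure (Icc a b \ {b}) := by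
      have : Ico a b ⊆ Icc a b \ {b} := fun x hx => ⟨⟨hx.1, hx.2.le⟩, ne_of_lt hx.2⟩
      exact closure_mono this (by rw [closure_Ico hab.ne]; exact ⟨hab.le, le_rfl⟩)
    exact mem_closure_iff_nhdsWithin_neBot.mp this
  refine ge_of_tendsto hd ?_
  filter_upwards [self_mem_nhdsWithin] with t ht
  have h1 : t < b := lt_of_le_of_ne ht.1.2 ht.2
  have hnum : g t - g b ≤ 0 := sub_nonpos.mpr (hmax t ht.1)
  rw [slope_def_field]
  have h2 : t - b < 0 := sub_neg.mpr h1
  rw [div_nonneg_iff]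
  right; exact ⟨hnum, h2.le⟩

def MP.clamp1 (a b x : ℝ) : ℝ := min (max x a) b

lemma MP.clamp1_continuous (a b : ℝ) : Continuous (MP.clamp1 a b) :=
  (continuous_id.max continuous_const).min continuous_const

lemma MP.clamp1_mem {a b : ℝ} (hab : a ≤ b) (x : ℝ) : MP.clamp1 a b x ∈ Icc a b :=
  ⟨le_min (le_max_right x a) hab, min_le_right _ _⟩

lemma MP.clamp1_eq {a b x : ℝ} (hx : x ∈ Icc a b) : MP.clamp1 a b x = x := by
  unfold MP.clamp1
  rw [max_eq_left hx.1, min_eq_left hx.2]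

def MP.proj (L : ℝ) (p : ℝ × ℝ × ℝ) : ℝ × ℝ × ℝ :=
  (MP.clamp1 0 L p.1, MP.clamp1 (-(π/2)) (π/2) p.2.1, MP.clamp1 (-π) π p.2.2)

lemma MP.proj_continuous (L : ℝ) : Continuous (MP.proj L) := by
  unfold MP.proj
  exact ((MP.clamp1_continuous 0 L).comp continuous_fst).prodMk
    ((((MP.clamp1_continuous _ _).comp continuous_fst).prodMk
      ((MP.clamp1_continuous _ _).comp continuous_snd)).comp continuous_snd)

lemma MP.mem_dom {L : ℝ} {p : ℝ × ℝ × ℝ} :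
    p ∈ milneDomain L ↔ p.1 ∈ Icc (0:ℝ) L ∧ p.2.1 ∈ Icc (-(π/2)) (π/2) ∧ p.2.2 ∈ Icc (-π) π := by
  simp only [milneDomain, Set.mem_prod]

lemma MP.proj_mem {L : ℝ} (hL : 0 ≤ L) (p : ℝ × ℝ × ℝ) : MP.proj L p ∈ milneDomain L := by
  have hπ := Real.pi_pos
  exact MP.mem_dom.mpr ⟨MP.clamp1_mem hL _, MP.clamp1_mem (by linarith) _, MP.clamp1_mem (by linarith) _⟩

lemma MP.proj_eq {L : ℝ} {p : ℝ × ℝ × ℝ} (hp : p ∈ milneDomain L) : MP.proj L p = p := by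
  obtain ⟨h1, h2, h3⟩ := MP.mem_dom.mp hp
  unfold MP.proj
  rw [MP.clamp1_eq h1, MP.clamp1_eq h2, MP.clamp1_eq h3]

lemma MP.interior_dom (L : ℝ) :
    interior (milneDomain L) = Ioo (0:ℝ) L ×ˢ Ioo (-(π/2)) (π/2) ×ˢ Ioo (-π) π := by
  rw [milneDomain, interior_prod_eq, interior_prod_eq, interior_Icc, interior_Icc, interior_Icc]

lemma MP.mem_int_dom {L : ℝ} {p : ℝ × ℝ × ℝ} :
    p ∈ interior (milneDomain L) ↔
      p.1 ∈ Ioo (0:ℝ) L ∧ p.2.1 ∈ Ioo (-(π/2)) (π/2) ∧ p.2.2 ∈ Ioo (-π) π := by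
  rw [MP.interior_dom]; simp [Set.mem_prod]

lemma MP.closure_int_dom {L : ℝ} (hL : 0 < L) :
    closure (interior (milneDomain L)) = milneDomain L := by
  have hπ := Real.pi_pos
  rw [MP.interior_dom, milneDomain, closure_prod_eq, closure_prod_eq,
    closure_Ioo hL.ne, closure_Ioo (by linarith : -(π/2) ≠ π/2), closure_Ioo (by linarith : -π ≠ π)]

lemma MP.dom_compact (L : ℝ) : IsCompact (milneDomain L) :=
  isCompact_Icc.prod (isCompact_Icc.prod isCompact_Icc)

lemma MP.dom_convex (L : ℝ) : Convex ℝ (milneDomain L) :=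
  (convex_Icc _ _).prod ((convex_Icc _ _).prod (convex_Icc _ _))

lemma MP.dom_uniqueDiff {L : ℝ} (hL : 0 < L) : UniqueDiffOn ℝ (milneDomain L) := by
  have hπ := Real.pi_pos
  refine uniqueDiffOn_convex (MP.dom_convex L) ?_
  rw [MP.interior_dom]
  exact (nonempty_Ioo.mpr hL).prod ((nonempty_Ioo.mpr (by linarith)).prod (nonempty_Ioo.mpr (by linarith)))

lemma MP.sectEta {f : ℝ × ℝ × ℝ → ℝ} {D : Set (ℝ × ℝ × ℝ)} {p : ℝ × ℝ × ℝ} {I : Set ℝ}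
    (A : ℝ × ℝ × ℝ →L[ℝ] ℝ) (hA : HasFDerivWithinAt f A D p)
    (hmap : ∀ t ∈ I, ((t, p.2.1, p.2.2) : ℝ × ℝ × ℝ) ∈ D) :
    HasDerivWithinAt (fun t => f (t, p.2.1, p.2.2)) (A (1, 0, 0)) I p.1 := by
  have hline : HasDerivWithinAt (fun t : ℝ => ((t, p.2.1, p.2.2) : ℝ × ℝ × ℝ))
      ((1 : ℝ), (0 : ℝ), (0 : ℝ)) I p.1 :=
    (HasDerivAt.prodMk (hasDerivAt_id p.1) (hasDerivAt_const p.1 (p.2.1, p.2.2))).hasDerivWithinAt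
  exact hA.comp_hasDerivWithinAt p.1 hline (fun t ht => hmap t ht)

lemma MP.sectPhi {f : ℝ × ℝ × ℝ → ℝ} {D : Set (ℝ × ℝ × ℝ)} {p : ℝ × ℝ × ℝ} {I : Set ℝ}
    (A : ℝ × ℝ × ℝ →L[ℝ] ℝ) (hA : HasFDerivWithinAt f A D p)
    (hmap : ∀ t ∈ I, ((p.1, t, p.2.2) : ℝ × ℝ × ℝ) ∈ D) :
    HasDerivWithinAt (fun t => f (p.1, t, p.2.2)) (A (0, 1, 0)) I p.2.1 := by
  have hline : HasDerivWithinAt (fun t : ℝ => ((p.1, t, p.2.2) : ℝ × ℝ × ℝ))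
      ((0 : ℝ), (1 : ℝ), (0 : ℝ)) I p.2.1 :=
    (HasDerivAt.prodMk (hasDerivAt_const p.2.1 p.1)
      (HasDerivAt.prodMk (hasDerivAt_id p.2.1) (hasDerivAt_const p.2.1 p.2.2))).hasDerivWithinAt
  exact hA.comp_hasDerivWithinAt p.2.1 hline (fun t ht => hmap t ht)

/- ===== angular-average lemmas (for globally continuous g) ===== -/

lemma MP.inner_continuous {g : ℝ × ℝ × ℝ → ℝ} (hg : Continuous g) :
    Continuous (fun q : ℝ × ℝ => ∫ φ in (-(π/2))..(π/2), g (q.1, φ, q.2) * Real.cos φ) := by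
  apply intervalIntegral.continuous_parametric_intervalIntegral_of_continuous'
    (f := fun (q : ℝ × ℝ) (φ : ℝ) => g (q.1, φ, q.2) * Real.cos φ) (μ := volume)
  exact (hg.comp (by fun_prop)).mul (by fun_prop)

lemma MP.angAvg_continuous {g : ℝ × ℝ × ℝ → ℝ} (hg : Continuous g) :
    Continuous (angAvg g) := by
  unfold angAvg
  refine continuous_const.mul ?_
  apply intervalIntegral.continuous_parametric_intervalIntegral_of_continuous'
    (f := fun (η : ℝ) (ψ : ℝ) => ∫ φ in (-(π/2))..(π/2), g (η, φ, ψ) * Real.cos φ) (μ := volume)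
  exact (MP.inner_continuous hg).comp (by fun_prop : Continuous (fun q : ℝ × ℝ => (q.1, q.2)))

lemma MP.angAvg_le {L M : ℝ} {g : ℝ × ℝ × ℝ → ℝ} (hg : Continuous g)
    (hb : ∀ p ∈ milneDomain L, g p ≤ M) :
    ∀ η ∈ Icc (0:ℝ) L, angAvg g η ≤ M := by
  have hπ := Real.pi_pos
  intro η hη
  have hIc : Continuous (fun ψ => ∫ φ in (-(π/2))..(π/2), g (η, φ, ψ) * Real.cos φ) :=
    (MP.inner_continuous hg).comp (Continuous.prodMk_right η)
  have hIle : ∀ ψ ∈ Icc (-π) π,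
      (∫ φ in (-(π/2))..(π/2), g (η, φ, ψ) * Real.cos φ) ≤ 2 * M := by
    intro ψ hψ
    have h1 : (∫ φ in (-(π/2))..(π/2), g (η, φ, ψ) * Real.cos φ)
        ≤ ∫ φ in (-(π/2))..(π/2), M * Real.cos φ := by
      refine intervalIntegral.integral_mono_on (by linarith)
        (((hg.comp (by fun_prop)).mul (by fun_prop)).intervalIntegrable _ _)
        ((continuous_const.mul Real.continuous_cos).intervalIntegrable _ _) ?_
      intro φ hφ
      exact mul_le_mul_of_nonneg_right (hb _ (MP.mem_dom.mpr ⟨hη, hφ, hψ⟩))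
        (Real.cos_nonneg_of_mem_Icc hφ)
    have h2 : (∫ φ in (-(π/2))..(π/2), M * Real.cos φ) = 2 * M := by
      rw [intervalIntegral.integral_const_mul, integral_cos]
      simp [Real.sin_pi_div_two]
      ring
    linarith
  have houter : (∫ ψ in (-π)..π, ∫ φ in (-(π/2))..(π/2), g (η, φ, ψ) * Real.cos φ)
      ≤ ∫ ψ in (-π)..π, (2*M : ℝ) :=
    intervalIntegral.integral_mono_on (by linarith) (hIc.intervalIntegrable _ _)
      intervalIntegrable_const hIle
  have hc : (∫ ψ in (-π)..π, (2*M : ℝ)) = 4 * π * M := by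
    rw [intervalIntegral.integral_const]
    simp
    ring
  unfold angAvg
  have h4 : (0:ℝ) < 4 * π := by linarith
  calc (1 / (4*π)) * ∫ ψ in (-π)..π, ∫ φ in (-(π/2))..(π/2), g (η, φ, ψ) * Real.cos φ
      ≤ (1 / (4*π)) * (4 * π * M) := by
        apply mul_le_mul_of_nonneg_left _ (by positivity)
        rw [← hc]; exact houter
    _ = M := by field_simp

lemma MP.angAvg_slice {L M η : ℝ} {g : ℝ × ℝ × ℝ → ℝ} (hg : Continuous g)
    (hb : ∀ p ∈ milneDomain L, g p ≤ M) (hη : η ∈ Icc (0:ℝ) L)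
    (havg : angAvg g η = M) :
    ∀ φ ∈ Icc (-(π/2)) (π/2), ∀ ψ ∈ Icc (-π) π, g (η, φ, ψ) = M := by
  have hπ := Real.pi_pos
  set I : ℝ → ℝ := fun ψ => ∫ φ in (-(π/2))..(π/2), g (η, φ, ψ) * Real.cos φ with hIdef
  have hIc : Continuous I := (MP.inner_continuous hg).comp (Continuous.prodMk_right η)
  have hT : (∫ ψ in (-π)..π, I ψ) = 4 * π * M := by
    have h4 : (4*π) ≠ 0 := by positivity
    unfold angAvg at havg
    rw [one_div_mul_eq_div, div_eq_iff h4] at havg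
    show (∫ ψ in (-π)..π, ∫ φ in (-(π/2))..(π/2), g (η, φ, ψ) * Real.cos φ) = 4 * π * M
    linarith
  set W : ℝ → ℝ := fun ψ => ∫ φ in (-(π/2))..(π/2), (M - g (η, φ, ψ)) * Real.cos φ with hWdef
  have hint1 : ∀ ψ : ℝ, IntervalIntegrable (fun φ => M * Real.cos φ) volume (-(π/2)) (π/2) :=
    fun ψ => (continuous_const.mul Real.continuous_cos).intervalIntegrable _ _
  have hint2 : ∀ ψ : ℝ, IntervalIntegrable (fun φ => g (η, φ, ψ) * Real.cos φ) volume (-(π/2)) (π/2) :=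
    fun ψ => ((hg.comp (by fun_prop)).mul (by fun_prop)).intervalIntegrable _ _
  have hMc : (∫ φ in (-(π/2))..(π/2), M * Real.cos φ) = 2 * M := by
    rw [intervalIntegral.integral_const_mul, integral_cos]
    simp [Real.sin_pi_div_two]
    ring
  have hWeq : ∀ ψ : ℝ, W ψ = 2 * M - I ψ := by
    intro ψ
    have hsub : (fun φ => (M - g (η, φ, ψ)) * Real.cos φ)
        = fun φ => M * Real.cos φ - g (η, φ, ψ) * Real.cos φ := by funext φ; ring
    show (∫ φ in (-(π/2))..(π/2), (M - g (η, φ, ψ)) * Real.cos φ) = 2 * M - I ψ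
    rw [hsub, intervalIntegral.integral_sub (hint1 ψ) (hint2 ψ), hMc]
  have hWc : Continuous W := by
    have : W = fun ψ => 2 * M - I ψ := funext hWeq
    rw [this]
    exact continuous_const.sub hIc
  have hWnn : ∀ ψ ∈ Icc (-π) π, 0 ≤ W ψ := by
    intro ψ hψ
    rw [hWdef]
    apply intervalIntegral.integral_nonneg (by linarith)
    intro φ hφ
    exact mul_nonneg (sub_nonneg.mpr (hb _ (MP.mem_dom.mpr ⟨hη, hφ, hψ⟩)))
      (Real.cos_nonneg_of_mem_Icc hφ)
  have hWint : (∫ ψ in (-π)..π, W ψ) = 0 := by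
    have : (∫ ψ in (-π)..π, W ψ) = (∫ ψ in (-π)..π, ((2*M : ℝ) - I ψ)) := by
      congr 1; funext ψ; exact hWeq ψ
    rw [this, intervalIntegral.integral_sub intervalIntegrable_const (hIc.intervalIntegrable _ _),
      hT, intervalIntegral.integral_const]
    simp
    ring
  have hW0 : ∀ ψ ∈ Icc (-π) π, W ψ = 0 :=
    MP.zero_of_nonneg_int_zero (by linarith) hWc.continuousOn hWnn hWint
  intro φ hφ ψ hψ
  have hg0 : ∀ φ' ∈ Icc (-(π/2)) (π/2), (M - g (η, φ', ψ)) * Real.cos φ' = 0 := by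
    apply MP.zero_of_nonneg_int_zero (by linarith)
      (((continuous_const.sub (hg.comp (by fun_prop))).mul (by fun_prop)).continuousOn)
      (fun φ' hφ' => mul_nonneg (sub_nonneg.mpr (hb _ (MP.mem_dom.mpr ⟨hη, hφ', hψ⟩)))
          (Real.cos_nonneg_of_mem_Icc hφ'))
    exact hW0 ψ hψ
  have hIoo : ∀ φ' ∈ Ioo (-(π/2)) (π/2), g (η, φ', ψ) = M := by
    intro φ' hφ'
    have hcos : 0 < Real.cos φ' := Real.cos_pos_of_mem_Ioo hφ'
    have := hg0 φ' ⟨hφ'.1.le, hφ'.2.le⟩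
    rcases mul_eq_zero.mp this with h | h
    · linarith [sub_eq_zero.mp h]
    · linarith
  have heq : EqOn (fun φ' => g (η, φ', ψ)) (fun _ => M) (closure (Ioo (-(π/2)) (π/2))) :=
    Set.EqOn.closure (fun φ' hφ' => hIoo φ' hφ') (hg.comp (by fun_prop)) continuous_const
  rw [closure_Ioo (by linarith : -(π/2) ≠ π/2)] at heq
  exact heq hφ



set_option maxHeartbeats 1000000 in
lemma MP.upper_bound {R₁ R₂ ε n : ℝ} {h : ℝ → ℝ → ℝ} {f : ℝ × ℝ × ℝ → ℝ}
    (hL0 : 0 < layerL ε n)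
    (hFC : ContinuousOn (fun p : ℝ × ℝ × ℝ => force R₁ R₂ ε p.1 p.2.2)
      (milneDomain (layerL ε n)))
    {CF : ℝ} (hCF0 : 0 ≤ CF)
    (hCF : ∀ p ∈ milneDomain (layerL ε n), |force R₁ R₂ ε p.1 p.2.2| ≤ CF)
    {M₀ : ℝ} (hM₀ : ∀ q ∈ inflowSet, |h q.1 q.2| ≤ M₀)
    (hsol : IsMilneSolution R₁ R₂ ε n h (fun _ => 0) f) :
    ∀ p ∈ milneDomain (layerL ε n),
      f p ≤ sSup ((fun q : ℝ × ℝ => h q.1 q.2) '' inflowSet) := by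
  have hπ := Real.pi_pos
  set L := layerL ε n with hLdef
  set D := milneDomain L with hDdef
  set Sup := sSup ((fun q : ℝ × ℝ => h q.1 q.2) '' inflowSet) with hSupdef
  -- basic domain facts
  have hDcomp : IsCompact D := MP.dom_compact L
  have hDclosed : IsClosed D := hDcomp.isClosed
  have hUD : UniqueDiffOn ℝ D := MP.dom_uniqueDiff hL0
  have hfc : ContinuousOn f D := hsol.smooth.continuousOn
  -- extension of f
  set ftil : ℝ × ℝ × ℝ → ℝ := fun p => f (MP.proj L p) with hftildef
  have hftilc : Continuous ftil :=
    hfc.comp_continuous (MP.proj_continuous L) (fun p => MP.proj_mem hL0.le p)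
  have hagree : ∀ p ∈ D, ftil p = f p := by
    intro p hp
    rw [hftildef]
    simp only []
    rw [MP.proj_eq hp]
  -- angAvg agreement
  have hAvgEq : ∀ η ∈ Icc (0:ℝ) L, angAvg f η = angAvg ftil η := by
    intro η hη
    unfold angAvg
    congr 1
    apply intervalIntegral.integral_congr
    intro ψ hψ
    rw [Set.uIcc_of_le (by linarith : -π ≤ π)] at hψ
    apply intervalIntegral.integral_congr
    intro φ hφ
    rw [Set.uIcc_of_le (by linarith : -(π/2) ≤ π/2)] at hφ
    show f (η, φ, ψ) * Real.cos φ = ftil (η, φ, ψ) * Real.cos φ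
    rw [hagree (η, φ, ψ) (MP.mem_dom.mpr ⟨hη, hφ, hψ⟩)]
  -- maximum
  have hDne : D.Nonempty := by
    refine ⟨(0, 0, 0), MP.mem_dom.mpr ⟨⟨le_rfl, hL0.le⟩, ?_, ?_⟩⟩
    · show (0:ℝ) ∈ Icc (-(π/2)) (π/2); constructor <;> linarith
    · show (0:ℝ) ∈ Icc (-π) π; constructor <;> linarith
  obtain ⟨p₀, hp₀D, hp₀max⟩ := hDcomp.exists_isMaxOn hDne hfc
  set M := f p₀ with hMdef
  have hMD : ∀ p ∈ D, f p ≤ M := fun p hp => hp₀max hp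
  have hbftil : ∀ p ∈ D, ftil p ≤ M := fun p hp => (hagree p hp) ▸ hMD p hp
  -- suffices M ≤ Sup
  intro p hp
  by_contra hcon
  push_neg at hcon
  have hSM : Sup < M := lt_of_lt_of_le hcon (hMD p hp)
  -- contradiction helpers
  have hbdd : BddAbove ((fun q : ℝ × ℝ => h q.1 q.2) '' inflowSet) := by
    refine ⟨M₀, ?_⟩
    rintro x ⟨q, hq, rfl⟩
    exact (abs_le.mp (hM₀ q hq)).2
  have hdone : ∀ φ ψ : ℝ, (φ, ψ) ∈ inflowSet → f (0, φ, ψ) = M → False := by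
    intro φ ψ hq hfq
    have h1 : h φ ψ = M := by rw [← hsol.inflow (φ, ψ) hq]; exact hfq
    have h2 : h φ ψ ≤ Sup := le_csSup hbdd ⟨(φ, ψ), hq, rfl⟩
    rw [h1] at h2
    exact absurd h2 (not_le.mpr hSM)
  -- derivative machinery
  set A : ℝ × ℝ × ℝ → (ℝ × ℝ × ℝ →L[ℝ] ℝ) := fun q => fderivWithin ℝ f D q with hAdef
  have hAc : ContinuousOn A D := hsol.smooth.continuousOn_fderivWithin hUD le_rfl
  have hdiffW : ∀ q ∈ D, HasFDerivWithinAt f (A q) D q := fun q hq =>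
    ((hsol.smooth.differentiableOn one_ne_zero) q hq).hasFDerivWithinAt
  have hmapEta : ∀ q ∈ D, ∀ t ∈ Icc (0:ℝ) L, ((t, q.2.1, q.2.2) : ℝ × ℝ × ℝ) ∈ D := by
    intro q hq t ht
    obtain ⟨h1, h2, h3⟩ := MP.mem_dom.mp hq
    exact MP.mem_dom.mpr ⟨ht, h2, h3⟩
  have hmapPhi : ∀ q ∈ D, ∀ t ∈ Icc (-(π/2)) (π/2), ((q.1, t, q.2.2) : ℝ × ℝ × ℝ) ∈ D := by
    intro q hq t ht
    obtain ⟨h1, h2, h3⟩ := MP.mem_dom.mp hq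
    exact MP.mem_dom.mpr ⟨h1, ht, h3⟩
  have hsectEta : ∀ q ∈ D,
      HasDerivWithinAt (fun t => f (t, q.2.1, q.2.2)) (A q (1,0,0)) (Icc (0:ℝ) L) q.1 :=
    fun q hq => MP.sectEta (A q) (hdiffW q hq) (hmapEta q hq)
  have hsectPhi : ∀ q ∈ D,
      HasDerivWithinAt (fun t => f (q.1, t, q.2.2)) (A q (0,1,0)) (Icc (-(π/2)) (π/2)) q.2.1 :=
    fun q hq => MP.sectPhi (A q) (hdiffW q hq) (hmapPhi q hq)
  -- interior equation in A-form
  have hEqA : ∀ q ∈ interior D,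
      Real.sin q.2.1 * (A q (1,0,0)) + force R₁ R₂ ε q.1 q.2.2 * Real.cos q.2.1 * (A q (0,1,0))
        + f q - angAvg ftil q.1 = 0 := by
    intro q hq
    obtain ⟨h1, h2, h3⟩ := MP.mem_int_dom.mp hq
    have hqD : q ∈ D := interior_subset hq
    have hd1 : dEta f q = A q (1,0,0) :=
      ((hsectEta q hqD).hasDerivAt (Icc_mem_nhds h1.1 h1.2)).deriv
    have hd2 : dPhi f q = A q (0,1,0) :=
      ((hsectPhi q hqD).hasDerivAt (Icc_mem_nhds h2.1 h2.2)).deriv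
    have hz : Real.sin q.2.1 * dEta f q + force R₁ R₂ ε q.1 q.2.2 * Real.cos q.2.1 * dPhi f q
        + f q - angAvg f q.1 = 0 := hsol.eqn q hq
    rw [hd1, hd2, hAvgEq q.1 ⟨h1.1.le, h1.2.le⟩] at hz
    exact hz
  -- closure equation
  have hEqD : ∀ q ∈ D,
      Real.sin q.2.1 * (A q (1,0,0)) + force R₁ R₂ ε q.1 q.2.2 * Real.cos q.2.1 * (A q (0,1,0))
        + f q - angAvg ftil q.1 = 0 := by
    set Φ : ℝ × ℝ × ℝ → ℝ := fun q =>
      Real.sin q.2.1 * (A q (1,0,0)) + force R₁ R₂ ε q.1 q.2.2 * Real.cos q.2.1 * (A q (0,1,0))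
        + f q - angAvg ftil q.1 with hΦdef
    have hΦc : ContinuousOn Φ D := by
      apply ContinuousOn.sub
      apply ContinuousOn.add
      apply ContinuousOn.add
      · exact ((Real.continuous_sin.comp (continuous_snd.fst)).continuousOn).mul
          (hAc.clm_apply continuousOn_const)
      · exact (hFC.mul ((Real.continuous_cos.comp (continuous_snd.fst)).continuousOn)).mul
          (hAc.clm_apply continuousOn_const)
      · exact hfc
      · exact ((MP.angAvg_continuous hftilc).comp continuous_fst).continuousOn
    intro q hq
    have hqcl : q ∈ closure (interior D) := by rw [MP.closure_int_dom hL0]; exact hq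
    haveI : (𝓝[interior D] q).NeBot := mem_closure_iff_nhdsWithin_neBot.mp hqcl
    have t1 : Tendsto Φ (𝓝[interior D] q) (𝓝 (Φ q)) :=
      ((hΦc q hq).mono_left (nhdsWithin_mono _ interior_subset))
    have hev : (fun _ : ℝ × ℝ × ℝ => (0:ℝ)) =ᶠ[𝓝[interior D] q] Φ := by
      filter_upwards [self_mem_nhdsWithin] with x hx
      exact (hEqA x hx).symm
    exact tendsto_nhds_unique t1 (Tendsto.congr' hev tendsto_const_nhds)
  -- norm bound on derivatives
  obtain ⟨pA, hpAD, hpAmax⟩ := hDcomp.exists_isMaxOn hDne hAc.norm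
  set CA := ‖A pA‖ with hCAdef
  have hCA0 : 0 ≤ CA := norm_nonneg _
  have hCA : ∀ q ∈ D, |A q (0,1,0)| ≤ CA := by
    intro q hq
    have h1 := (A q).le_opNorm (0,1,0)
    have hn : ‖((0:ℝ), (1:ℝ), (0:ℝ))‖ = 1 := by simp [Prod.norm_def]
    rw [hn, mul_one] at h1
    calc |A q (0,1,0)| = ‖A q (0,1,0)‖ := rfl
      _ ≤ ‖A q‖ := h1
      _ ≤ CA := hpAmax hq
  -- the φ-transport term vanishes at any maximum point
  have hterm2 : ∀ q ∈ D, f q = M →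
      force R₁ R₂ ε q.1 q.2.2 * Real.cos q.2.1 * (A q (0,1,0)) = 0 := by
    intro q hqD hqM
    obtain ⟨h1, h2, h3⟩ := MP.mem_dom.mp hqD
    rcases eq_or_lt_of_le h2.1 with hb1 | hb1
    · rw [← hb1, Real.cos_neg, Real.cos_pi_div_two]
      ring
    rcases eq_or_lt_of_le h2.2 with hb2 | hb2
    · rw [hb2, Real.cos_pi_div_two]
      ring
    -- φ interior: derivative vanishes
    have hda : HasDerivAt (fun t => f (q.1, t, q.2.2)) (A q (0,1,0)) q.2.1 :=
      (hsectPhi q hqD).hasDerivAt (Icc_mem_nhds hb1 hb2)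
    have hlm : IsLocalMax (fun t => f (q.1, t, q.2.2)) q.2.1 := by
      filter_upwards [Icc_mem_nhds hb1 hb2] with t ht
      have : f (q.1, t, q.2.2) ≤ M := hMD _ (hmapPhi q hqD t ht)
      calc f (q.1, t, q.2.2) ≤ M := this
        _ = f (q.1, q.2.1, q.2.2) := hqM.symm
    rw [hlm.hasDerivAt_eq_zero hda, mul_zero]
  -- average equals M at suitable max points, giving a full slice of maxima
  have hslice_of_avg : ∀ η ∈ Icc (0:ℝ) L, angAvg ftil η = M →
      ∀ φ ∈ Icc (-(π/2)) (π/2), ∀ ψ ∈ Icc (-π) π, f (η, φ, ψ) = M := by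
    intro η hη havg φ hφ ψ hψ
    have := MP.angAvg_slice hftilc hbftil hη havg φ hφ ψ hψ
    rw [hagree _ (MP.mem_dom.mpr ⟨hη, hφ, hψ⟩)] at this
    exact this
  -- set of maximum points and minimal η
  set E : Set (ℝ × ℝ × ℝ) := D ∩ f ⁻¹' {M} with hEdef
  have hEclosed : IsClosed E := hfc.preimage_isClosed_of_isClosed hDclosed isClosed_singleton
  have hEcomp : IsCompact E := hDcomp.of_isClosed_subset hEclosed inter_subset_left
  have hEne : E.Nonempty := ⟨p₀, hp₀D, rfl⟩
  obtain ⟨ps, hpsE, hpsmin⟩ := hEcomp.exists_isMinOn hEne continuous_fst.continuousOn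
  have hpsD : ps ∈ D := hpsE.1
  have hpsM : f ps = M := hpsE.2
  have hmin : ∀ q ∈ E, ps.1 ≤ q.1 := fun q hq => hpsmin hq
  obtain ⟨hps1, hps2, hps3⟩ := MP.mem_dom.mp hpsD
  -- Gronwall-line contradiction machinery
  have hgron : ∀ e : ℝ, e ∈ Ioc (0:ℝ) L →
      (∀ φ ∈ Icc (-(π/2)) (π/2), ∀ ψ ∈ Icc (-π) π, f (e, φ, ψ) = M) →
      (∀ q ∈ D, q.1 < e → f q < M) → False := by
    intro e he hslice hstrict
    set C := CF * CA with hCdef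
    have hC0 : 0 ≤ C := mul_nonneg hCF0 hCA0
    set τ := min e 1 / 2 with hτdef
    have hτ0 : 0 < τ := by
      have := lt_min he.1 one_pos
      positivity
    have hτe : τ ≤ e / 2 := by
      have := min_le_left e 1
      rw [hτdef]; linarith
    have hτ1 : τ ≤ 1 / 2 := by
      have := min_le_right e 1
      rw [hτdef]; linarith
    set t₀ := e - τ with ht₀def
    have ht₀0 : 0 < t₀ := by rw [ht₀def]; linarith [he.1]
    have ht₀e : t₀ < e := by rw [ht₀def]; linarith
    have ht₀L : t₀ ≤ L := by rw [ht₀def]; linarith [he.2]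
    -- key estimate along the line ψ = 0, φ = φ₀ near π/2
    have key : ∀ φ₀ ∈ Ico (π/3) (π/2),
        M - ftil (t₀, φ₀, 0) ≤ C * Real.cos φ₀ * (Real.exp 1 - 1) := by
      intro φ₀ hφ₀
      have hφ₀1 : -(π/2) < φ₀ := by linarith [hφ₀.1]
      have hφ₀2 : φ₀ < π/2 := hφ₀.2
      have hcos : 0 < Real.cos φ₀ := Real.cos_pos_of_mem_Ioo ⟨hφ₀1, hφ₀2⟩
      set s := Real.sin φ₀ with hsdef
      have hsin3 : Real.sin (π/3) ≤ s := by
        rcases eq_or_lt_of_le hφ₀.1 with hh | hh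
        · rw [hsdef, ← hh]
        · exact (Real.strictMonoOn_sin ⟨by linarith, by linarith⟩
            ⟨by linarith, hφ₀2.le⟩ hh).le
      have hsge : 1/2 ≤ s := by
        rw [Real.sin_pi_div_three] at hsin3
        have h3 : (1:ℝ) ≤ Real.sqrt 3 := by
          rw [show (1:ℝ) = Real.sqrt 1 from (Real.sqrt_one).symm]
          exact Real.sqrt_le_sqrt (by norm_num)
        linarith
      have hs0 : (0:ℝ) < s := by linarith
      set K := C * Real.cos φ₀ with hKdef
      have hK0 : 0 ≤ K := mul_nonneg hC0 hcos.le
      set z : ℝ → ℝ := fun t => (M - ftil (t, φ₀, 0) + K) * Real.exp (t / s) with hzdef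
      have hzc : Continuous z := by
        apply Continuous.mul
        · exact (continuous_const.sub (hftilc.comp (by fun_prop))).add continuous_const
        · exact Real.continuous_exp.comp (continuous_id.div_const s)
      have hder : ∀ t ∈ Ioo t₀ e, ∃ d, HasDerivAt z d t ∧ 0 ≤ d := by
        intro t ht
        have htL : t < L := lt_of_lt_of_le ht.2 he.2
        have ht0 : 0 < t := lt_trans ht₀0 ht.1
        have hmem0 : (0:ℝ) ∈ Icc (-π) π := ⟨by linarith, by linarith⟩
        have hmem0' : (0:ℝ) ∈ Ioo (-π) π := ⟨by linarith, by linarith⟩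
        have hpD : ((t, φ₀, 0) : ℝ × ℝ × ℝ) ∈ D := MP.mem_dom.mpr
          ⟨⟨ht0.le, htL.le⟩, ⟨hφ₀1.le, hφ₀2.le⟩, hmem0⟩
        have hpint : ((t, φ₀, 0) : ℝ × ℝ × ℝ) ∈ interior D := MP.mem_int_dom.mpr
          ⟨⟨ht0, htL⟩, ⟨hφ₀1, hφ₀2⟩, hmem0'⟩
        have hfd : HasDerivAt (fun u => f (u, φ₀, 0)) (A (t, φ₀, 0) (1,0,0)) t :=
          (hsectEta (t, φ₀, 0) hpD).hasDerivAt (Icc_mem_nhds ht0 htL)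
        have hftd : HasDerivAt (fun u => ftil (u, φ₀, 0)) (A (t, φ₀, 0) (1,0,0)) t := by
          apply hfd.congr_of_eventuallyEq
          filter_upwards [Icc_mem_nhds ht0 htL] with u hu
          exact hagree (u, φ₀, 0) (MP.mem_dom.mpr ⟨hu, ⟨hφ₀1.le, hφ₀2.le⟩, (⟨by linarith, by linarith⟩ : (0:ℝ) ∈ Icc (-π) π)⟩)

        have hexp : HasDerivAt (fun u : ℝ => Real.exp (u / s)) (Real.exp (t/s) * (1/s)) t := by
          have h1 : HasDerivAt (fun u : ℝ => u / s) (1/s) t := (hasDerivAt_id t).div_const s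
          have := (Real.hasDerivAt_exp (t/s)).comp t h1
          exact this
        have hu : HasDerivAt (fun u => M - ftil (u, φ₀, 0) + K) (0 - A (t, φ₀, 0) (1,0,0)) t :=
          ((hasDerivAt_const t M).sub hftd).add_const K
        have hzd : HasDerivAt z ((0 - A (t, φ₀, 0) (1,0,0)) * Real.exp (t/s)
            + (M - ftil (t, φ₀, 0) + K) * (Real.exp (t/s) * (1/s))) t := hu.mul hexp
        refine ⟨_, hzd, ?_⟩
        have heqn : Real.sin φ₀ * (A (t, φ₀, 0) (1,0,0))
            + force R₁ R₂ ε t 0 * Real.cos φ₀ * (A (t, φ₀, 0) (0,1,0))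
            + f (t, φ₀, 0) - angAvg ftil t = 0 := hEqA (t, φ₀, 0) hpint
        have hA2 : |A (t, φ₀, 0) (0,1,0)| ≤ CA := hCA (t, φ₀, 0) hpD
        have hFb : |force R₁ R₂ ε t 0| ≤ CF := hCF (t, φ₀, 0) hpD
        have habs : |force R₁ R₂ ε t 0 * Real.cos φ₀ * (A (t, φ₀, 0) (0,1,0))|
            ≤ CF * Real.cos φ₀ * CA := by
          rw [abs_mul, abs_mul, abs_of_pos hcos]
          have h1 : |force R₁ R₂ ε t 0| * Real.cos φ₀ ≤ CF * Real.cos φ₀ :=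
            mul_le_mul_of_nonneg_right hFb hcos.le
          exact mul_le_mul h1 hA2 (abs_nonneg _) (mul_nonneg hCF0 hcos.le)
        have hT : -(force R₁ R₂ ε t 0 * Real.cos φ₀ * (A (t, φ₀, 0) (0,1,0)))
            ≤ CF * Real.cos φ₀ * CA := by
          exact (neg_le_abs _).trans habs
        have havgle : angAvg ftil t ≤ M :=
          MP.angAvg_le hftilc hbftil t ⟨ht0.le, htL.le⟩
        have hKeq : K = CF * Real.cos φ₀ * CA := by rw [hKdef, hCdef]; ring
        have hkey1 : s * (A (t, φ₀, 0) (1,0,0)) ≤ M - f (t, φ₀, 0) + K := by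
          rw [hsdef]
          linarith
        have hfteq : ftil (t, φ₀, 0) = f (t, φ₀, 0) := hagree _ hpD
        have hE : 0 < Real.exp (t/s) := Real.exp_pos _
        have hrw : (0 - A (t, φ₀, 0) (1,0,0)) * Real.exp (t/s)
            + (M - f (t, φ₀, 0) + K) * (Real.exp (t/s) * (1/s))
            = Real.exp (t/s) * ((M - f (t, φ₀, 0) + K) - s * (A (t, φ₀, 0) (1,0,0))) / s := by
          field_simp
          ring
        rw [hfteq, hrw]
        apply div_nonneg _ hs0.le
        apply mul_nonneg hE.le
        linarith
      have hmono : MonotoneOn z (Icc t₀ e) := by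
        apply monotoneOn_of_deriv_nonneg (convex_Icc t₀ e) hzc.continuousOn
        · intro t ht
          rw [interior_Icc] at ht
          obtain ⟨d, hd, _⟩ := hder t ht
          exact hd.differentiableAt.differentiableWithinAt
        · intro t ht
          rw [interior_Icc] at ht
          obtain ⟨d, hd, hd0⟩ := hder t ht
          rw [hd.deriv]
          exact hd0
      have hfe : ftil (e, φ₀, 0) = M := by
        rw [hagree (e, φ₀, 0) (MP.mem_dom.mpr ⟨⟨he.1.le, he.2⟩, ⟨hφ₀1.le, hφ₀2.le⟩,
          (⟨by linarith, by linarith⟩ : (0:ℝ) ∈ Icc (-π) π)⟩)]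
        exact hslice φ₀ ⟨hφ₀1.le, hφ₀2.le⟩ 0 (⟨by linarith, by linarith⟩ : (0:ℝ) ∈ Icc (-π) π)
      have hchain : z t₀ ≤ z e := hmono ⟨le_rfl, ht₀e.le⟩ ⟨ht₀e.le, le_rfl⟩ ht₀e.le
      have hze : z e = K * Real.exp (e / s) := by
        show (M - ftil (e, φ₀, 0) + K) * Real.exp (e / s) = K * Real.exp (e / s)
        rw [hfe]
        ring
      have hsplit : Real.exp (e / s) = Real.exp (t₀/s) * Real.exp (τ/s) := by
        rw [← Real.exp_add]
        congr 1
        rw [ht₀def]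
        field_simp
        ring
      have hexpτ : Real.exp (τ/s) ≤ Real.exp 1 := by
        apply Real.exp_le_exp.mpr
        rw [div_le_one hs0]
        linarith
      have hEt₀ : 0 < Real.exp (t₀/s) := Real.exp_pos _
      have hmain : (M - ftil (t₀, φ₀, 0) + K) ≤ K * Real.exp (τ/s) := by
        have h2 : (M - ftil (t₀, φ₀, 0) + K) * Real.exp (t₀ / s)
            ≤ K * (Real.exp (t₀/s) * Real.exp (τ/s)) := by
          have := hchain
          rw [hze, hsplit] at this
          exact this
        have h2' : (M - ftil (t₀, φ₀, 0) + K) * Real.exp (t₀/s)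
            ≤ (K * Real.exp (τ/s)) * Real.exp (t₀/s) := by
          calc (M - ftil (t₀, φ₀, 0) + K) * Real.exp (t₀/s)
              ≤ K * (Real.exp (t₀/s) * Real.exp (τ/s)) := h2
            _ = (K * Real.exp (τ/s)) * Real.exp (t₀/s) := by ring
        exact le_of_mul_le_mul_right h2' hEt₀
      have hfin : K * Real.exp (τ/s) ≤ K * Real.exp 1 :=
        mul_le_mul_of_nonneg_left hexpτ hK0
      calc M - ftil (t₀, φ₀, 0) ≤ K * Real.exp 1 - K := by linarith
        _ = K * (Real.exp 1 - 1) := by ring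
    -- limit φ₀ → π/2
    set G : ℝ → ℝ := fun φ => M - ftil (t₀, φ, 0) - C * Real.cos φ * (Real.exp 1 - 1) with hGdef
    have hGc : Continuous G := by
      apply Continuous.sub
      · exact continuous_const.sub (hftilc.comp (by fun_prop))
      · exact (continuous_const.mul Real.continuous_cos).mul continuous_const
    have hclosed : IsClosed {x : ℝ | G x ≤ 0} := isClosed_le hGc continuous_const
    have hsub : Ico (π/3) (π/2) ⊆ {x : ℝ | G x ≤ 0} := by
      intro φ₀ hφ₀
      have := key φ₀ hφ₀
      show G φ₀ ≤ 0
      show M - ftil (t₀, φ₀, 0) - C * Real.cos φ₀ * (Real.exp 1 - 1) ≤ 0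
      linarith
    have hcl : Icc (π/3) (π/2) ⊆ {x : ℝ | G x ≤ 0} := by
      rw [← closure_Ico (by linarith : π/3 ≠ π/2)]
      exact closure_minimal hsub hclosed
    have hG2 : M - ftil (t₀, π/2, 0) - C * Real.cos (π/2) * (Real.exp 1 - 1) ≤ 0 :=
      hcl ⟨by linarith, le_rfl⟩
    rw [Real.cos_pi_div_two] at hG2
    have hpd : ((t₀, π/2, 0) : ℝ × ℝ × ℝ) ∈ D := MP.mem_dom.mpr
      ⟨⟨ht₀0.le, ht₀L⟩, (⟨by linarith, le_rfl⟩ : (π/2 : ℝ) ∈ Icc (-(π/2)) (π/2)),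
        (⟨by linarith, by linarith⟩ : (0:ℝ) ∈ Icc (-π) π)⟩
    have hft : ftil (t₀, π/2, 0) = f (t₀, π/2, 0) := hagree _ hpd
    have hlt := hstrict _ hpd ht₀e
    rw [← hft] at hlt
    have hzero : C * (0:ℝ) * (Real.exp 1 - 1) = 0 := by ring
    linarith [hG2, hlt, hzero]
  -- ====== case analysis on the minimal-η maximum point ======
  obtain ⟨e0, φs, ψs⟩ := ps
  replace hps1 : e0 ∈ Icc (0:ℝ) L := hps1
  replace hps2 : φs ∈ Icc (-(π/2)) (π/2) := hps2
  replace hps3 : ψs ∈ Icc (-π) π := hps3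
  replace hpsM : f (e0, φs, ψs) = M := hpsM
  replace hmin : ∀ q ∈ E, e0 ≤ q.1 := hmin
  replace hpsD : ((e0, φs, ψs) : ℝ × ℝ × ℝ) ∈ D := hpsD
  rcases eq_or_lt_of_le hps1.1 with h0 | h0
  · -- minimal η is 0
    have h0' : e0 = 0 := h0.symm
    subst h0'
    rcases lt_or_ge 0 (Real.sin φs) with hsin | hsin
    · -- inflow point: done
      exact hdone φs ψs ⟨hsin, hps2, hps3⟩ hpsM
    · -- outgoing: one-sided equation forces the average to be M
      have hsect : HasDerivWithinAt (fun t => f (t, φs, ψs))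
          (A (0, φs, ψs) (1,0,0)) (Icc 0 L) 0 := hsectEta (0, φs, ψs) hpsD
      have hA1 : A (0, φs, ψs) (1,0,0) ≤ 0 := by
        apply MP.deriv_nonpos_left hL0 hsect
        intro t ht
        show f (t, φs, ψs) ≤ f (0, φs, ψs)
        rw [hpsM]
        exact hMD _ (MP.mem_dom.mpr ⟨ht, hps2, hps3⟩)
      have heqn : Real.sin φs * (A (0, φs, ψs) (1,0,0))
          + force R₁ R₂ ε 0 ψs * Real.cos φs * (A (0, φs, ψs) (0,1,0))
          + f (0, φs, ψs) - angAvg ftil 0 = 0 := hEqD (0, φs, ψs) hpsD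
      have ht2 : force R₁ R₂ ε 0 ψs * Real.cos φs * (A (0, φs, ψs) (0,1,0)) = 0 :=
        hterm2 (0, φs, ψs) hpsD hpsM
      have havgle : angAvg ftil 0 ≤ M := MP.angAvg_le hftilc hbftil 0 hps1
      have hsA : 0 ≤ Real.sin φs * (A (0, φs, ψs) (1,0,0)) := by nlinarith [hsin, hA1]
      have havgM : angAvg ftil 0 = M := by linarith [hpsM]
      have hs0' : f (0, π/4, 0) = M :=
        hslice_of_avg 0 hps1 havgM (π/4) ⟨by linarith, by linarith⟩ 0
          (⟨by linarith, by linarith⟩ : (0:ℝ) ∈ Icc (-π) π)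
      exact hdone (π/4) 0 ⟨Real.sin_pos_of_pos_of_lt_pi (by linarith) (by linarith),
        (⟨by linarith, by linarith⟩ : (π/4:ℝ) ∈ Icc (-(π/2)) (π/2)),
        (⟨by linarith, by linarith⟩ : (0:ℝ) ∈ Icc (-π) π)⟩ hs0'
  · -- minimal η is positive
    have hstrict : ∀ q ∈ D, q.1 < e0 → f q < M := by
      intro q hq hlt
      rcases lt_or_eq_of_le (hMD q hq) with hh | hh
      · exact hh
      · exact absurd (hmin q ⟨hq, by simp [hh]⟩) (not_le.mpr hlt)
    have havgle : angAvg ftil e0 ≤ M := MP.angAvg_le hftilc hbftil e0 hps1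
    have havgM : angAvg ftil e0 = M := by
      rcases eq_or_lt_of_le hps1.2 with hLc | hLc
      · -- L : upper endpoint, use reflection if sin φs < 0
        subst hLc
        rcases le_or_gt 0 (Real.sin φs) with hsgn | hsgn
        · have hsect : HasDerivWithinAt (fun t => f (t, φs, ψs))
              (A (L, φs, ψs) (1,0,0)) (Icc 0 L) L := hsectEta (L, φs, ψs) hpsD
          have hA1 : 0 ≤ A (L, φs, ψs) (1,0,0) := by
            apply MP.deriv_nonneg_right hL0 hsect
            intro t ht
            show f (t, φs, ψs) ≤ f (L, φs, ψs)
            rw [hpsM]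
            exact hMD _ (MP.mem_dom.mpr ⟨ht, hps2, hps3⟩)
          have heqn : Real.sin φs * (A (L, φs, ψs) (1,0,0))
              + force R₁ R₂ ε L ψs * Real.cos φs * (A (L, φs, ψs) (0,1,0))
              + f (L, φs, ψs) - angAvg ftil L = 0 := hEqD (L, φs, ψs) hpsD
          have ht2 : force R₁ R₂ ε L ψs * Real.cos φs * (A (L, φs, ψs) (0,1,0)) = 0 :=
            hterm2 (L, φs, ψs) hpsD hpsM
          have hsA : 0 ≤ Real.sin φs * (A (L, φs, ψs) (1,0,0)) := mul_nonneg hsgn hA1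
          linarith [hpsM]
        · -- reflection
          have hre := hsol.reflect φs ψs
          rw [← hLdef] at hre
          have hp'D : ((L, -φs, ψs) : ℝ × ℝ × ℝ) ∈ D := MP.mem_dom.mpr
            ⟨hps1, ⟨by linarith [hps2.2], by linarith [hps2.1]⟩, hps3⟩
          have hp'M : f (L, -φs, ψs) = M := by rw [← hre]; exact hpsM
          have hsect : HasDerivWithinAt (fun t => f (t, -φs, ψs))
              (A (L, -φs, ψs) (1,0,0)) (Icc 0 L) L := hsectEta (L, -φs, ψs) hp'D
          have hA1 : 0 ≤ A (L, -φs, ψs) (1,0,0) := by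
            apply MP.deriv_nonneg_right hL0 hsect
            intro t ht
            show f (t, -φs, ψs) ≤ f (L, -φs, ψs)
            rw [hp'M]
            exact hMD _ (MP.mem_dom.mpr ⟨ht, ⟨by linarith [hps2.2], by linarith [hps2.1]⟩, hps3⟩)
          have heqn : Real.sin (-φs) * (A (L, -φs, ψs) (1,0,0))
              + force R₁ R₂ ε L ψs * Real.cos (-φs) * (A (L, -φs, ψs) (0,1,0))
              + f (L, -φs, ψs) - angAvg ftil L = 0 := hEqD (L, -φs, ψs) hp'D
          have ht2 : force R₁ R₂ ε L ψs * Real.cos (-φs) * (A (L, -φs, ψs) (0,1,0)) = 0 :=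
            hterm2 (L, -φs, ψs) hp'D hp'M
          have hsgn' : 0 ≤ Real.sin (-φs) := by rw [Real.sin_neg]; linarith
          have hsA : 0 ≤ Real.sin (-φs) * (A (L, -φs, ψs) (1,0,0)) := mul_nonneg hsgn' hA1
          linarith [hp'M]
      · -- e0 interior: derivative vanishes
        have hda : HasDerivAt (fun t => f (t, φs, ψs)) (A (e0, φs, ψs) (1,0,0)) e0 :=
          (hsectEta (e0, φs, ψs) hpsD).hasDerivAt (Icc_mem_nhds h0 hLc)
        have hlm : IsLocalMax (fun t => f (t, φs, ψs)) e0 := by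
          filter_upwards [Icc_mem_nhds h0 hLc] with t ht
          calc f (t, φs, ψs) ≤ M := hMD _ (MP.mem_dom.mpr ⟨ht, hps2, hps3⟩)
            _ = f (e0, φs, ψs) := hpsM.symm
        have hA1 : A (e0, φs, ψs) (1,0,0) = 0 := hlm.hasDerivAt_eq_zero hda
        have heqn : Real.sin φs * (A (e0, φs, ψs) (1,0,0))
            + force R₁ R₂ ε e0 ψs * Real.cos φs * (A (e0, φs, ψs) (0,1,0))
            + f (e0, φs, ψs) - angAvg ftil e0 = 0 := hEqD (e0, φs, ψs) hpsD
        have ht2 : force R₁ R₂ ε e0 ψs * Real.cos φs * (A (e0, φs, ψs) (0,1,0)) = 0 :=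
          hterm2 (e0, φs, ψs) hpsD hpsM
        have hsA : Real.sin φs * (A (e0, φs, ψs) (1,0,0)) = 0 := by rw [hA1, mul_zero]
        linarith [hpsM]
    exact hgron e0 ⟨h0, hps1.2⟩ (hslice_of_avg e0 hps1 havgM) hstrict

lemma MP.neg_solution {R₁ R₂ ε n : ℝ} {h : ℝ → ℝ → ℝ} {f : ℝ × ℝ × ℝ → ℝ}
    (hsol : IsMilneSolution R₁ R₂ ε n h (fun _ => 0) f) :
    IsMilneSolution R₁ R₂ ε n (fun φ ψ => -(h φ ψ)) (fun _ => 0) (fun p => -(f p)) := by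
  constructor
  · exact hsol.smooth.neg
  · intro p hp
    have heq := hsol.eqn p hp
    have h1 : dEta (fun p => -(f p)) p = -(dEta f p) := by
      show deriv (fun t => -(f (t, p.2.1, p.2.2))) p.1 = -(deriv (fun t => f (t, p.2.1, p.2.2)) p.1)
      exact deriv.neg
    have h2 : dPhi (fun p => -(f p)) p = -(dPhi f p) := by
      show deriv (fun t => -(f (p.1, t, p.2.2))) p.2.1 = -(deriv (fun t => f (p.1, t, p.2.2)) p.2.1)
      exact deriv.neg
    have h3 : angAvg (fun p => -(f p)) p.1 = -(angAvg f p.1) := by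
      unfold angAvg
      have hfun : (fun ψ => ∫ φ in (-(π/2))..(π/2), (fun p : ℝ × ℝ × ℝ => -(f p)) (p.1, φ, ψ) * Real.cos φ)
          = fun ψ => -(∫ φ in (-(π/2))..(π/2), f (p.1, φ, ψ) * Real.cos φ) := by
        funext ψ
        rw [← intervalIntegral.integral_neg]
        congr 1
        funext φ
        ring
      rw [hfun, intervalIntegral.integral_neg]
      ring
    rw [h1, h2, h3]
    show _ = (0:ℝ)
    have : Real.sin p.2.1 * dEta f p + force R₁ R₂ ε p.1 p.2.2 * Real.cos p.2.1 * dPhi f p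
        + f p - angAvg f p.1 = 0 := heq
    linarith [this]
  · intro q hq
    rw [hsol.inflow q hq]
  · intro φ ψ
    rw [hsol.reflect φ ψ]

/-- Theorem "Milne theorem 3": maximum principle for the ε-Milne
problem with geometric correction and zero source. -/
theorem milne_maximum_principle (R₁ R₂ n : ℝ) (hR₁ : 0 < R₁) (hR₂ : 0 < R₂)
    (hn : n ∈ Ioo (0 : ℝ) (1 / 2)) :
    ∃ ε₀ ∈ Ioo (0 : ℝ) 1, ∀ ε ∈ Ioc (0 : ℝ) ε₀, ∀ h : ℝ → ℝ → ℝ, ∀ f : ℝ × ℝ × ℝ → ℝ,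
      (∃ M : ℝ, ∀ q ∈ inflowSet, |h q.1 q.2| ≤ M) →
      IsMilneSolution R₁ R₂ ε n h (fun _ => 0) f →
      ∀ p ∈ milneDomain (layerL ε n),
        sInf ((fun q : ℝ × ℝ => h q.1 q.2) '' inflowSet) ≤ f p ∧
        f p ≤ sSup ((fun q : ℝ × ℝ => h q.1 q.2) '' inflowSet) := by
  have hπ := Real.pi_pos
  have hRm : 0 < min R₁ R₂ := lt_min hR₁ hR₂
  have h1n : 0 < 1 - n := by linarith [hn.2]
  refine ⟨min (1/2) ((min R₁ R₂ / 2) ^ ((1:ℝ)/(1-n))), ⟨?_, ?_⟩, ?_⟩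
  · exact lt_min (by norm_num) (Real.rpow_pos_of_pos (by positivity) _)
  · exact lt_of_le_of_lt (min_le_left _ _) (by norm_num)
  intro ε hε h f hbd hsol
  obtain ⟨M₀, hM₀⟩ := hbd
  have hε0 : 0 < ε := hε.1
  have hε1 : ε ≤ 1/2 := hε.2.trans (min_le_left _ _)
  have hεR : ε ^ (1 - n) ≤ min R₁ R₂ / 2 := by
    have h1 : ε ≤ (min R₁ R₂ / 2) ^ ((1:ℝ)/(1-n)) := hε.2.trans (min_le_right _ _)
    calc ε ^ (1-n) ≤ ((min R₁ R₂ / 2) ^ ((1:ℝ)/(1-n))) ^ (1-n) :=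
          Real.rpow_le_rpow hε0.le h1 h1n.le
      _ = min R₁ R₂ / 2 := by
          rw [← Real.rpow_mul (by positivity)]
          rw [one_div, inv_mul_cancel₀ (ne_of_gt h1n), Real.rpow_one]
  have hL0 : 0 < layerL ε n := Real.rpow_pos_of_pos hε0 _
  have hεL : ε * layerL ε n = ε ^ (1-n) := by
    rw [layerL, sub_eq_add_neg, Real.rpow_add hε0, Real.rpow_one]
  have hden : ∀ η ∈ Icc (0:ℝ) (layerL ε n),
      min R₁ R₂ / 2 ≤ R₁ - ε*η ∧ min R₁ R₂ / 2 ≤ R₂ - ε*η := by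
    intro η hη
    have h1 : ε * η ≤ ε * layerL ε n := mul_le_mul_of_nonneg_left hη.2 hε0.le
    have h2 : ε * η ≤ min R₁ R₂ / 2 := by rw [hεL] at h1; linarith
    constructor
    · linarith [min_le_left R₁ R₂]
    · linarith [min_le_right R₁ R₂]
  set Rm := min R₁ R₂ with hRmdef
  have hCF : ∀ p ∈ milneDomain (layerL ε n), |force R₁ R₂ ε p.1 p.2.2| ≤ 4 / Rm := by
    intro p hp
    obtain ⟨hη, hφ, hψ⟩ := MP.mem_dom.mp hp
    obtain ⟨hd1, hd2⟩ := hden p.1 hη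
    have hd1p : 0 < R₁ - ε * p.1 := lt_of_lt_of_le (by positivity) hd1
    have hd2p : 0 < R₂ - ε * p.1 := lt_of_lt_of_le (by positivity) hd2
    have hs1 : Real.sin p.2.2 ^ 2 / (R₁ - ε * p.1) ≤ 2 / Rm := by
      have hup : Real.sin p.2.2 ^ 2 ≤ 1 := Real.sin_sq_le_one _
      have : Real.sin p.2.2 ^ 2 / (R₁ - ε * p.1) ≤ 1 / (Rm / 2) :=
        div_le_div₀ zero_le_one hup (by positivity) hd1
      calc Real.sin p.2.2 ^ 2 / (R₁ - ε * p.1) ≤ 1 / (Rm / 2) := this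
        _ = 2 / Rm := by rw [div_div_eq_mul_div]; ring_nf
    have hs2 : Real.cos p.2.2 ^ 2 / (R₂ - ε * p.1) ≤ 2 / Rm := by
      have hup : Real.cos p.2.2 ^ 2 ≤ 1 := Real.cos_sq_le_one _
      have : Real.cos p.2.2 ^ 2 / (R₂ - ε * p.1) ≤ 1 / (Rm / 2) :=
        div_le_div₀ zero_le_one hup (by positivity) hd2
      calc Real.cos p.2.2 ^ 2 / (R₂ - ε * p.1) ≤ 1 / (Rm / 2) := this
        _ = 2 / Rm := by rw [div_div_eq_mul_div]; ring_nf
    have hnn : 0 ≤ Real.sin p.2.2 ^ 2 / (R₁ - ε * p.1) + Real.cos p.2.2 ^ 2 / (R₂ - ε * p.1) := by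
      positivity
    rw [force, abs_mul, abs_neg, abs_of_pos hε0, abs_of_nonneg hnn]
    have hsum : Real.sin p.2.2 ^ 2 / (R₁ - ε * p.1) + Real.cos p.2.2 ^ 2 / (R₂ - ε * p.1)
        ≤ 4 / Rm := by
      have : (2:ℝ) / Rm + 2 / Rm = 4 / Rm := by ring
      linarith
    calc ε * (Real.sin p.2.2 ^ 2 / (R₁ - ε * p.1) + Real.cos p.2.2 ^ 2 / (R₂ - ε * p.1))
        ≤ 1 * (4 / Rm) := by
          apply mul_le_mul (by linarith) hsum hnn zero_le_one
      _ = 4 / Rm := one_mul _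
  have hFC : ContinuousOn (fun p : ℝ × ℝ × ℝ => force R₁ R₂ ε p.1 p.2.2)
      (milneDomain (layerL ε n)) := by
    unfold force
    apply ContinuousOn.mul continuousOn_const
    apply ContinuousOn.add
    · apply ContinuousOn.div
      · exact ((Real.continuous_sin.comp (continuous_snd.snd)).pow 2).continuousOn
      · exact (continuous_const.sub (continuous_const.mul continuous_fst)).continuousOn
      · intro p hp
        obtain ⟨hη, hφ, hψ⟩ := MP.mem_dom.mp hp
        have := (hden p.1 hη).1
        have : 0 < R₁ - ε * p.1 := lt_of_lt_of_le (by positivity) this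
        exact ne_of_gt this
    · apply ContinuousOn.div
      · exact ((Real.continuous_cos.comp (continuous_snd.snd)).pow 2).continuousOn
      · exact (continuous_const.sub (continuous_const.mul continuous_fst)).continuousOn
      · intro p hp
        obtain ⟨hη, hφ, hψ⟩ := MP.mem_dom.mp hp
        have := (hden p.1 hη).2
        have : 0 < R₂ - ε * p.1 := lt_of_lt_of_le (by positivity) this
        exact ne_of_gt this
  have hCF0 : (0:ℝ) ≤ 4 / Rm := by positivity
  intro p hp
  constructor
  · -- lower bound via the negated solution
    have hsol' := MP.neg_solution hsol
    have hM₀' : ∀ q ∈ inflowSet, |(fun φ ψ => -(h φ ψ)) q.1 q.2| ≤ M₀ := by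
      intro q hq
      simp only [abs_neg]
      exact hM₀ q hq
    have hub := MP.upper_bound hL0 hFC hCF0 hCF hM₀' hsol' p hp
    have himg : ((fun q : ℝ × ℝ => (fun φ ψ => -(h φ ψ)) q.1 q.2) '' inflowSet)
        = (fun x : ℝ => (-1 : ℝ) • x) '' ((fun q : ℝ × ℝ => h q.1 q.2) '' inflowSet) := by
      rw [← Set.image_comp]
      apply Set.image_congr
      intro q hq
      simp
    rw [himg, Set.image_smul, Real.sSup_smul_of_nonpos (by norm_num) _] at hub
    have : -(f p) ≤ -(sInf ((fun q : ℝ × ℝ => h q.1 q.2) '' inflowSet)) := by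
      have hsm : (-1 : ℝ) • sInf ((fun q : ℝ × ℝ => h q.1 q.2) '' inflowSet)
          = -(sInf ((fun q : ℝ × ℝ => h q.1 q.2) '' inflowSet)) := by
        rw [smul_eq_mul]; ring
      rw [hsm] at hub
      exact hub
    linarith
  · exact MP.upper_bound hL0 hFC hCF0 hCF hM₀ hsol p hp


end MilneStmt
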